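/- Let X and Y be partially ordered sets, let φ : X → Y be an order embedding, and let F ⊆ Y be a cut. If ( ⋃ {φ^#(U) | U a cut of X with φ^#(U) ⊆ F} )^{ul} = ⋂ {φ^#(V) | V a cut of X with F ⊆ φ^#(V)}, and this common value equals F (equivalently, the collapsed chain of inclusions forces it to equal F, which holds since the supremum side is contained in F and F is contained in the infimum side), then there exists a cut A ⊆ X with φ^#(A) = F; indeed A = ⋂ {V | V a cut of X with F ⊆ φ^#(V)} is such a solution. -/

import Mathlib

/-- `ul A = (A^u)^l`: the lower bounds of the set of upper bounds of `A`. -/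
def ul {X : Type*} [PartialOrder X] (A : Set X) : Set X :=
  lowerBounds (upperBounds A)

/-- `A` is a cut if `A^{ul} = A`. -/
def IsCut {X : Type*} [PartialOrder X] (A : Set X) : Prop :=
  ul A = A

/-- `φ^#(A) = (φ(A))^{ul}`. -/
def sharp {X Y : Type*} [PartialOrder X] [PartialOrder Y] (φ : X → Y) (A : Set X) : Set Y :=
  ul (φ '' A)

lemma subset_ul {X : Type*} [PartialOrder X] (A : Set X) : A ⊆ ul A :=
  fun _ ha _ hb => hb ha

lemma ul_mono {X : Type*} [PartialOrder X] {A B : Set X} (h : A ⊆ B) : ul A ⊆ ul B :=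
  lowerBounds_mono_set (upperBounds_mono_set h)

lemma ub_ul {X : Type*} [PartialOrder X] (A : Set X) :
    upperBounds (ul A) = upperBounds A := by
  apply Set.Subset.antisymm
  · exact upperBounds_mono_set (subset_ul A)
  · intro b hb x hx
    exact hx hb

lemma ul_ul {X : Type*} [PartialOrder X] (A : Set X) : ul (ul A) = ul A := by
  unfold ul
  rw [show upperBounds (lowerBounds (upperBounds A)) = upperBounds A from ub_ul A]

theorem stmt1 {X Y : Type*} [PartialOrder X] [PartialOrder Y] (φ : X → Y)
    (hφ : ∀ a b : X, φ a ≤ φ b ↔ a ≤ b) (F : Set Y) (hF : IsCut F)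
    (heq : ul (⋃₀ {S : Set Y | ∃ U : Set X, IsCut U ∧ sharp φ U ⊆ F ∧ S = sharp φ U}) =
      ⋂₀ {S : Set Y | ∃ V : Set X, IsCut V ∧ F ⊆ sharp φ V ∧ S = sharp φ V})
    (hFeq : ul (⋃₀ {S : Set Y | ∃ U : Set X, IsCut U ∧ sharp φ U ⊆ F ∧ S = sharp φ U}) = F) :
    IsCut (⋂₀ {V : Set X | IsCut V ∧ F ⊆ sharp φ V}) ∧
      sharp φ (⋂₀ {V : Set X | IsCut V ∧ F ⊆ sharp φ V}) = F := by
  set A := ⋂₀ {V : Set X | IsCut V ∧ F ⊆ sharp φ V} with hA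
  have hmono : Monotone φ := fun a b h => (hφ a b).mpr h
  -- A is a cut
  have hAcut : IsCut A := by
    apply Set.Subset.antisymm
    · intro x hx
      intro V hV
      have h1 : A ⊆ V := Set.sInter_subset_of_mem hV
      have : ul A ⊆ V := hV.1 ▸ ul_mono h1
      exact this hx
    · exact subset_ul A
  refine ⟨hAcut, ?_⟩
  apply Set.Subset.antisymm
  · -- sharp φ A ⊆ F
    have hFi : F = ⋂₀ {S : Set Y | ∃ V : Set X, IsCut V ∧ F ⊆ sharp φ V ∧ S = sharp φ V} := by
      rw [← heq, hFeq]
    rw [hFi]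
    intro y hy S hS
    obtain ⟨V, hVc, hFV, rfl⟩ := hS
    have h1 : A ⊆ V := Set.sInter_subset_of_mem ⟨hVc, hFV⟩
    have h3 : sharp φ A ⊆ sharp φ V := by
      have : ul (φ '' A) ⊆ ul (ul (φ '' V)) :=
        ul_mono ((Set.image_mono (f := φ) h1).trans (subset_ul _))
      rwa [ul_ul] at this
    exact h3 hy
  · -- F ⊆ sharp φ A
    rw [← hFeq]
    have hL : (⋃₀ {S : Set Y | ∃ U : Set X, IsCut U ∧ sharp φ U ⊆ F ∧ S = sharp φ U}) ⊆
        sharp φ A := by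
      intro y hy
      obtain ⟨S, ⟨U, hUc, hUF, rfl⟩, hyS⟩ := hy
      -- U ⊆ A
      have hUA : U ⊆ A := by
        intro u hu V hV
        obtain ⟨hVc, hFV⟩ := hV
        have h1 : sharp φ U ⊆ sharp φ V := hUF.trans hFV
        have h2 : φ u ∈ sharp φ V := h1 (subset_ul _ ⟨u, hu, rfl⟩)
        have : u ∈ ul V := by
          intro w hw
          have : φ u ≤ φ w := h2 (fun z ⟨v, hv, hvz⟩ => hvz ▸ hmono (hw hv))
          exact (hφ u w).mp this
        rwa [hVc] at this
      have : sharp φ U ⊆ sharp φ A := by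
        have : ul (φ '' U) ⊆ ul (φ '' A) := ul_mono (Set.image_mono (f := φ) hUA)
        exact this
      exact this hyS
    have := ul_mono hL
    rwa [show ul (sharp φ A) = sharp φ A from ul_ul _] at this
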